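/- Let H be a complex vector space, let γ0, γ1 ∈ H, let a, b be complex numbers with T := |a|² + |b|² > 1/2, and set γ+ := a·γ0 + b·γ1, γ− := (conj(b)·γ0 − conj(a)·γ1)/√(2T − 1). In ℂ² with standard basis e0, e1, set ξ+ := (conj(a)·e0 + conj(b)·e1)/√T and ξ− := (b·e0 − a·e1)/√T. Then in the tensor product ℂ² ⊗[ℂ] H the following identity holds: (e0 ⊗ γ0 + e1 ⊗ γ1)/√2 = (ξ+ ⊗ γ+ + √(2T − 1)·(ξ− ⊗ γ−))/√(2T). -/

import Mathlib

open scoped TensorProduct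

/-- The entangled state identity: with `γ+ = a • γ0 + b • γ1`,
`γ- = (conj b • γ0 - conj a • γ1)/√(2T-1)`, `ξ+ = (conj a • e0 + conj b • e1)/√T`,
`ξ- = (b • e0 - a • e1)/√T` and `T = |a|² + |b|² > 1/2`, one has
`(e0 ⊗ γ0 + e1 ⊗ γ1)/√2 = (ξ+ ⊗ γ+ + √(2T-1) (ξ- ⊗ γ-))/√(2T)` in `ℂ² ⊗[ℂ] H`. -/
theorem entangled_state_identity {H : Type*} [AddCommGroup H] [Module ℂ H]
    (γ0 γ1 : H) (a b : ℂ) (T : ℝ)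
    (hT : T = ‖a‖ ^ 2 + ‖b‖ ^ 2) (hThalf : 1 / 2 < T) :
    let e0 : EuclideanSpace ℂ (Fin 2) := EuclideanSpace.single 0 1
    let e1 : EuclideanSpace ℂ (Fin 2) := EuclideanSpace.single 1 1
    let γp : H := a • γ0 + b • γ1
    let γm : H := ((Real.sqrt (2 * T - 1) : ℂ))⁻¹ •
      ((starRingEnd ℂ b) • γ0 - (starRingEnd ℂ a) • γ1)
    let ξp : EuclideanSpace ℂ (Fin 2) :=
      ((Real.sqrt T : ℂ))⁻¹ • ((starRingEnd ℂ a) • e0 + (starRingEnd ℂ b) • e1)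
    let ξm : EuclideanSpace ℂ (Fin 2) :=
      ((Real.sqrt T : ℂ))⁻¹ • (b • e0 - a • e1)
    ((Real.sqrt 2 : ℂ))⁻¹ • (e0 ⊗ₜ[ℂ] γ0 + e1 ⊗ₜ[ℂ] γ1) =
      ((Real.sqrt (2 * T) : ℂ))⁻¹ •
        (ξp ⊗ₜ[ℂ] γp + ((Real.sqrt (2 * T - 1) : ℂ)) • (ξm ⊗ₜ[ℂ] γm)) := by
  intro e0 e1 γp γm ξp ξm
  have hT0 : (0:ℝ) < T := lt_trans (by norm_num) hThalf
  have h2T1 : (0:ℝ) < 2 * T - 1 := by linarith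
  have hs : (Real.sqrt T : ℂ) * (Real.sqrt T : ℂ) = (T:ℂ) := by
    norm_cast; exact Real.mul_self_sqrt hT0.le
  have hr : (Real.sqrt (2*T-1) : ℂ) * (Real.sqrt (2*T-1) : ℂ) = ((2*T-1 : ℝ):ℂ) := by
    norm_cast; exact Real.mul_self_sqrt h2T1.le
  have h2 : (Real.sqrt 2 : ℂ) * (Real.sqrt 2 : ℂ) = 2 := by
    norm_cast; exact Real.mul_self_sqrt (by norm_num)
  have h2T : (Real.sqrt (2*T) : ℂ) = (Real.sqrt 2 : ℂ) * (Real.sqrt T : ℂ) := by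
    norm_cast; exact Real.sqrt_mul (by norm_num) T
  have hsne : (Real.sqrt T : ℂ) ≠ 0 := by
    simpa using (Real.sqrt_ne_zero'.2 hT0)
  have hrne : (Real.sqrt (2*T-1) : ℂ) ≠ 0 := by
    simpa using (Real.sqrt_ne_zero'.2 h2T1)
  have h2ne : (Real.sqrt 2 : ℂ) ≠ 0 := by
    simpa using (Real.sqrt_ne_zero'.2 (by norm_num : (0:ℝ) < 2))
  have hnorm : (starRingEnd ℂ a) * a + (starRingEnd ℂ b) * b = (T:ℂ) := by
    rw [hT]; push_cast
    rw [Complex.conj_mul', Complex.conj_mul']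
  simp only [γp, γm, ξp, ξm, TensorProduct.add_tmul, TensorProduct.sub_tmul,
    TensorProduct.tmul_add, TensorProduct.tmul_sub, ← TensorProduct.smul_tmul',
    TensorProduct.tmul_smul, smul_smul, smul_add, smul_sub, h2T]
  set s : ℂ := ((Real.sqrt T : ℝ) : ℂ) with hsdef
  set r : ℂ := ((Real.sqrt (2*T-1) : ℝ) : ℂ) with hrdef
  set q : ℂ := ((Real.sqrt 2 : ℝ) : ℂ) with hqdef
  have hrr : r * r⁻¹ = 1 := mul_inv_cancel₀ hrne
  match_scalars
  · field_simp
    linear_combination hs - hnorm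
  · field_simp
    linear_combination hs - hnorm
  · linear_combination ((q*s)⁻¹ * s⁻¹ * (starRingEnd ℂ) b * a) * hrr
  · linear_combination ((q*s)⁻¹ * s⁻¹ * (starRingEnd ℂ) a * b) * hrr
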